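/- For any closed convex set C ⊆ ℝⁿ containing the origin, the closure of the barrier cone of C equals the polar of the recession cone of C, i.e., cl(B_C) = (0⁺C)°. -/

import Mathlib

open RealInnerProductSpace

noncomputable def supp {n : ℕ} (C : Set (EuclideanSpace ℝ (Fin n)))
    (a : EuclideanSpace ℝ (Fin n)) : EReal :=
  ⨆ x ∈ C, ((⟪a, x⟫ : ℝ) : EReal)

def barrierCone {n : ℕ} (C : Set (EuclideanSpace ℝ (Fin n))) :
    Set (EuclideanSpace ℝ (Fin n)) :=
  {a | supp C a < ⊤}

def recCone {n : ℕ} (C : Set (EuclideanSpace ℝ (Fin n))) :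
    Set (EuclideanSpace ℝ (Fin n)) :=
  {d | ∀ x ∈ C, ∀ t : ℝ, 0 ≤ t → x + t • d ∈ C}

lemma mem_barrierCone_iff {n : ℕ} {C : Set (EuclideanSpace ℝ (Fin n))}
    {a : EuclideanSpace ℝ (Fin n)} :
    a ∈ barrierCone C ↔ ∃ M : ℝ, ∀ x ∈ C, ⟪a, x⟫ ≤ M := by
  constructor
  · intro h
    refine ⟨(supp C a).toReal, fun x hx => ?_⟩
    have h1 : ((⟪a, x⟫ : ℝ) : EReal) ≤ supp C a :=
      le_iSup₂ (f := fun x (_ : x ∈ C) => ((⟪a, x⟫ : ℝ) : EReal)) x hx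
    have h2 : supp C a ≤ ((supp C a).toReal : EReal) := EReal.le_coe_toReal h.ne_top
    exact_mod_cast h1.trans h2
  · rintro ⟨M, hM⟩
    have : supp C a ≤ (M : EReal) :=
      iSup₂_le fun x hx => EReal.coe_le_coe_iff.2 (hM x hx)
    exact lt_of_le_of_lt this (EReal.coe_lt_top M)

/-- The negation of the barrier cone, as a convex cone. -/
noncomputable def negBCone {n : ℕ} (C : Set (EuclideanSpace ℝ (Fin n))) :
    ConvexCone ℝ (EuclideanSpace ℝ (Fin n)) where
  carrier := {a | -a ∈ barrierCone C}
  smul_mem' := by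
    intro c hc a ha
    rw [Set.mem_setOf_eq, mem_barrierCone_iff] at ha ⊢
    obtain ⟨M, hM⟩ := ha
    refine ⟨c * M, fun x hx => ?_⟩
    rw [← smul_neg, real_inner_smul_left]
    exact mul_le_mul_of_nonneg_left (hM x hx) hc.le
  add_mem' := by
    intro a ha b hb
    rw [Set.mem_setOf_eq, mem_barrierCone_iff] at ha hb ⊢
    obtain ⟨M, hM⟩ := ha
    obtain ⟨N, hN⟩ := hb
    refine ⟨M + N, fun x hx => ?_⟩
    rw [neg_add, inner_add_left]
    exact add_le_add (hM x hx) (hN x hx)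

theorem stmt1 {n : ℕ} (C : Set (EuclideanSpace ℝ (Fin n)))
    (hcl : IsClosed C) (hconv : Convex ℝ C) (h0 : (0 : EuclideanSpace ℝ (Fin n)) ∈ C) :
    closure (barrierCone C) = {y | ∀ x ∈ recCone C, ⟪y, x⟫ ≤ (0 : ℝ)} := by
  classical
  let E := EuclideanSpace ℝ (Fin n)
  set B : Set (EuclideanSpace ℝ (Fin n)) := barrierCone C with hB
  have h0B : (0 : E) ∈ B := mem_barrierCone_iff.2 ⟨0, fun x _ => by simp⟩
  have hcarrier : (negBCone C : Set E) = -B := by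
    ext a; simp [negBCone, hB, Set.mem_neg]; exact Iff.rfl
  -- Step 1 : recCone C = inner dual cone of negBCone C
  have hrec : recCone C = (ProperCone.innerDual (negBCone C : Set E) : Set E) := by
    ext d
    constructor
    · intro hd a ha
      rw [hcarrier, Set.mem_neg, mem_barrierCone_iff] at ha
      obtain ⟨M, hM⟩ := ha
      by_contra hlt
      push_neg at hlt
      have hc : 0 < ⟪-a, d⟫ := by
        rw [inner_neg_left]; linarith [real_inner_comm a d, (show ⟪a, d⟫ < 0 from hlt)]
      have hM0 : (0 : ℝ) ≤ M := by simpa using hM 0 h0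
      set t : ℝ := (M + 1) / ⟪-a, d⟫ with ht
      have htpos : 0 ≤ t := div_nonneg (by linarith) hc.le
      have hmem : t • d ∈ C := by simpa using hd 0 h0 t htpos
      have := hM (t • d) hmem
      rw [real_inner_smul_right] at this
      rw [ht] at this
      rw [div_mul_cancel₀ _ hc.ne'] at this
      linarith
    · intro hd
      intro x hx t ht
      by_contra hnot
      obtain ⟨f, u, hfu, huf⟩ := geometric_hahn_banach_closed_point hconv hcl hnot
      set a : E := (InnerProductSpace.toDual ℝ E).symm f with ha
      have hfa : ∀ z : E, ⟪a, z⟫ = f z := fun z => InnerProductSpace.toDual_symm_apply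
      have haB : a ∈ B := mem_barrierCone_iff.2 ⟨u, fun z hz => by
        rw [hfa]; exact (hfu z hz).le⟩
      have hdual : (0 : ℝ) ≤ ⟪-a, d⟫ := hd (x := -a) (by rw [hcarrier, Set.mem_neg, neg_neg]; exact haB)
      have had : ⟪a, d⟫ ≤ 0 := by rw [inner_neg_left] at hdual; linarith
      have h1 : f (x + t • d) = ⟪a, x⟫ + t * ⟪a, d⟫ := by
        rw [← hfa, inner_add_right, real_inner_smul_right]
      have h2 : f x < u := hfu x hx
      rw [← hfa] at h2
      have : t * ⟪a, d⟫ ≤ 0 := mul_nonpos_of_nonneg_of_nonpos ht had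
      have h3 : u < ⟪a, x⟫ + t * ⟪a, d⟫ := by rw [← h1]; exact huf
      linarith
  -- Step 2 : closure of negBCone as a convex cone
  have hne : ((negBCone C).closure : Set E).Nonempty := by
    refine ⟨0, ?_⟩
    rw [ConvexCone.coe_closure]
    exact subset_closure (by rw [hcarrier]; simpa using h0B)
  have hclosed : IsClosed (((negBCone C).closure : Set E)) := by
    rw [ConvexCone.coe_closure]; exact isClosed_closure
  -- dual of a set equals dual of its closure
  have hdualclos :
      (ProperCone.innerDual (negBCone C : Set E) : Set E)
        = (ProperCone.innerDual ((negBCone C).closure : Set E) : Set E) := by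
    apply Set.Subset.antisymm
    · intro y hy x hx
      rw [ConvexCone.coe_closure] at hx
      have hcl' : IsClosed {z : E | 0 ≤ ⟪z, y⟫} := by
        have : Continuous fun z : E => ⟪z, y⟫ :=
          continuous_id.inner continuous_const
        exact isClosed_le continuous_const this
      exact hcl'.closure_subset_iff.2 (fun z hz => hy (x := z) hz) hx
    · intro y hy x hx
      exact hy (x := x) (by rw [ConvexCone.coe_closure]; exact subset_closure hx)
  -- bipolar theorem
  let P : ProperCone ℝ E :=
    { toSubmodule :=
        { carrier := ((negBCone C).closure : Set E)
          add_mem' := fun ha hb => (negBCone C).closure.add_mem ha hb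
          zero_mem' := by
            rw [ConvexCone.coe_closure]
            exact subset_closure (by rw [hcarrier]; simpa using h0B)
          smul_mem' := fun c x hx => by
            rcases eq_or_lt_of_le c.2 with hc | hc
            · have hc0 : c = 0 := NNReal.eq hc.symm
              subst hc0
              rw [zero_smul]
              rw [ConvexCone.coe_closure]
              exact subset_closure (by rw [hcarrier]; simpa using h0B)
            · exact (negBCone C).closure.smul_mem hc hx }
      isClosed' := hclosed }
  have hbipolar : (ProperCone.innerDual (ProperCone.innerDual ((negBCone C).closure : Set E) : Set E) : Set E)
      = ((negBCone C).closure : Set E) := by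
    have := congrArg (fun K : ProperCone ℝ E => (K : Set E)) (ProperCone.innerDual_innerDual P)
    exact this
  -- Conclude
  ext y
  have key : y ∈ closure B ↔ -y ∈ ((negBCone C).closure : Set E) := by
    rw [ConvexCone.coe_closure, hcarrier]
    rw [← neg_closure, Set.mem_neg, neg_neg]
  rw [Set.mem_setOf_eq, key, ← hbipolar]
  constructor
  · intro h x hx
    have hx' : x ∈ (ProperCone.innerDual ((negBCone C).closure : Set E) : Set E) := by
      rw [← hdualclos, ← hrec]; exact hx
    have : 0 ≤ ⟪x, -y⟫ := h (x := x) hx'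
    rw [real_inner_comm, inner_neg_left] at this
    linarith
  · intro h z hz
    have hz' : z ∈ recCone C := by rw [hrec, hdualclos]; exact hz
    have := h z hz'
    change 0 ≤ ⟪z, -y⟫
    rw [inner_neg_right, real_inner_comm]
    linarith
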